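/- Let $(S_n)_{n \in \mathbb{N}}$ be any sequence of operators such that for each $n$, $S_n$ is a self-adjoint extension of $J_n$ on $\ell^2(\mathbb{N};\mathbb{C})$. Define the operator $S$ on $\ell^2(\mathbb{N}\times\mathbb{N};\mathbb{C})$ with domain $D(S) = \{ f \in D(T^*) : \text{for every } n, \; P_n f \in D(S_n) \}$ (where $(P_n f)(m) := f(m,n)$) and $S f = T^* f$. Then $S$ is a self-adjoint extension of $T$. -/

import Mathlib

noncomputable section

/-- The Hilbert space `ℓ²(ℕ; ℂ)`. -/
abbrev H1 : Type := lp (fun _ : ℕ => ℂ) 2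

/-- The Hilbert space `ℓ²(ℕ×ℕ; ℂ)`. -/
abbrev H2 : Type := lp (fun _ : ℕ × ℕ => ℂ) 2

/-- `β(m,n) = (1/2)·√(m+1)·(1-m-n)`. -/
def beta (m n : ℕ) : ℝ := (1 / 2) * Real.sqrt ((m : ℝ) + 1) * (1 - (m : ℝ) - (n : ℝ))

/-- The formal Jacobi-type action on doubly indexed sequences, with `β(-1,n) = 0`. -/
def jacobiAct (g : ℕ × ℕ → ℂ) : ℕ × ℕ → ℂ := fun p =>
  (beta p.1 p.2 : ℂ) * g (p.1 + 1, p.2) +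
    (if p.1 = 0 then 0 else (beta (p.1 - 1) p.2 : ℂ) * g (p.1 - 1, p.2))

/-- The formal Jacobi action in the row `n`, with `β(-1,n) = 0`. -/
def jacobiActRow (n : ℕ) (u : ℕ → ℂ) : ℕ → ℂ := fun m =>
  (beta m n : ℂ) * u (m + 1) +
    (if m = 0 then 0 else (beta (m - 1) n : ℂ) * u (m - 1))

open scoped ComplexConjugate

namespace CalvoAux

local notation "⟪" x ", " y "⟫" => @inner ℂ _ _ x y

/-! ### Generic summability and density helpers -/

lemma summable_of_support_finite {α : Type*} {h : α → ℂ} (hh : {a | h a ≠ 0}.Finite) :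
    Summable h := by
  refine summable_of_ne_finset_zero (s := hh.toFinset) fun b hb => ?_
  by_contra H
  exact hb (hh.mem_toFinset.mpr H)

lemma dense_of_finiteSupport {α : Type*} [DecidableEq α]
    (D : Submodule ℂ (lp (fun _ : α => ℂ) 2))
    (hD : ∀ f : lp (fun _ : α => ℂ) 2, {i | f i ≠ 0}.Finite → f ∈ D) :
    Dense (D : Set (lp (fun _ : α => ℂ) 2)) := by
  intro f
  have h := lp.hasSum_single (E := fun _ : α => ℂ) (by norm_num : (2 : ENNReal) ≠ ⊤) f
  refine mem_closure_of_tendsto h (Filter.Eventually.of_forall fun s => ?_)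
  refine D.sum_mem fun i _ => hD _ ?_
  refine Set.Finite.subset (Set.finite_singleton i) fun j hj => ?_
  by_contra hji
  exact hj (lp.single_apply_ne 2 i _ (by simpa using hji))

lemma memℓp_of_finiteSupport {α : Type*} {f : α → ℂ} (h : {i | f i ≠ 0}.Finite) :
    Memℓp f 2 :=
  (memℓp_zero h).of_exponent_ge (by norm_num)

lemma sq_summable_of_memℓp {α : Type*} {f : α → ℂ} (h : Memℓp f 2) :
    Summable (fun i => ‖f i‖ ^ (2 : ℝ)) := by
  rw [memℓp_gen_iff (by norm_num : 0 < (2 : ENNReal).toReal)] at h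
  simpa using h

lemma memℓp_of_sq_summable {α : Type*} {f : α → ℂ}
    (h : Summable (fun i => ‖f i‖ ^ (2 : ℝ))) : Memℓp f 2 := by
  apply memℓp_gen
  simpa using h

lemma rowMemℓp (f : H2) (n : ℕ) : Memℓp (fun m : ℕ => f (m, n)) 2 := by
  apply memℓp_of_sq_summable
  exact (sq_summable_of_memℓp (lp.memℓp f)).comp_injective
    (fun a b h => by simpa using h)

/-! ### Summation by parts in 2D -/

def actA (f : ℕ × ℕ → ℂ) : ℕ × ℕ → ℂ := fun p => (beta p.1 p.2 : ℂ) * f (p.1 + 1, p.2)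

def actB (f : ℕ × ℕ → ℂ) : ℕ × ℕ → ℂ := fun p =>
  if p.1 = 0 then 0 else (beta (p.1 - 1) p.2 : ℂ) * f (p.1 - 1, p.2)

lemma jacobiAct_eq (f : ℕ × ℕ → ℂ) : jacobiAct f = fun p => actA f p + actB f p := rfl

def shift2 : ℕ × ℕ → ℕ × ℕ := fun p => (p.1 + 1, p.2)

lemma shift2_inj : Function.Injective shift2 := by
  intro a b h
  simp only [shift2, Prod.mk.injEq, add_left_inj] at h
  exact Prod.ext h.1 h.2

lemma tsum_shift2 {F : ℕ × ℕ → ℂ} (h0 : ∀ p : ℕ × ℕ, p.1 = 0 → F p = 0) :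
    ∑' q, F (shift2 q) = ∑' p, F p := by
  refine shift2_inj.tsum_eq fun p hp => ?_
  rcases p with ⟨m, n⟩
  rcases Nat.eq_zero_or_pos m with hm | hm
  · exact absurd (h0 _ hm) hp
  · exact ⟨(m - 1, n), by simp [shift2, Nat.sub_add_cancel hm]⟩

lemma pairA (f g : ℕ × ℕ → ℂ) :
    ∑' p, conj (actA f p) * g p = ∑' p, conj (f p) * actB g p := by
  rw [← tsum_shift2 (F := fun p => conj (f p) * actB g p)
    (fun p hp => by simp [actB, hp])]
  refine tsum_congr fun q => ?_
  rcases q with ⟨m, n⟩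
  simp only [shift2, actA, actB, Nat.add_sub_cancel, Nat.succ_ne_zero, if_false, map_mul,
    Complex.conj_ofReal]
  ring

lemma pairB (f g : ℕ × ℕ → ℂ) :
    ∑' p, conj (actB f p) * g p = ∑' p, conj (f p) * actA g p := by
  rw [← tsum_shift2 (F := fun p => conj (actB f p) * g p)
    (fun p hp => by simp [actB, hp])]
  refine tsum_congr fun q => ?_
  rcases q with ⟨m, n⟩
  simp only [shift2, actA, actB, Nat.add_sub_cancel, Nat.succ_ne_zero, if_false, map_mul,
    Complex.conj_ofReal]
  ring

lemma pair2 (f g : ℕ × ℕ → ℂ) (hg : {p : ℕ × ℕ | g p ≠ 0}.Finite) :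
    ∑' p, conj (jacobiAct f p) * g p = ∑' p, conj (f p) * jacobiAct g p := by
  have hsupA : {p : ℕ × ℕ | conj (actA f p) * g p ≠ 0}.Finite :=
    hg.subset fun p hp => by
      simp only [Set.mem_setOf_eq] at *; exact fun h => hp (by rw [h, mul_zero])
  have hsupB : {p : ℕ × ℕ | conj (actB f p) * g p ≠ 0}.Finite :=
    hg.subset fun p hp => by
      simp only [Set.mem_setOf_eq] at *; exact fun h => hp (by rw [h, mul_zero])
  have hAg : {p : ℕ × ℕ | conj (f p) * actA g p ≠ 0}.Finite := by
    refine (hg.preimage (Set.injOn_of_injective shift2_inj)).subset fun p hp => ?_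
    simp only [Set.mem_setOf_eq, Set.mem_preimage] at *
    intro h
    simp only [shift2] at h
    exact hp (by simp [actA, h])
  have hBg : {p : ℕ × ℕ | conj (f p) * actB g p ≠ 0}.Finite := by
    refine ((hg.image shift2)).subset fun p hp => ?_
    simp only [Set.mem_setOf_eq] at hp
    rcases p with ⟨m, n⟩
    rcases Nat.eq_zero_or_pos m with hm | hm
    · exact absurd (by simp [actB, hm]) hp
    · refine ⟨(m - 1, n), ?_, by simp [shift2, Nat.sub_add_cancel hm]⟩
      simp only [Set.mem_setOf_eq]
      intro h
      exact hp (by simp [actB, Nat.pos_iff_ne_zero.mp hm, h])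
  calc ∑' p, conj (jacobiAct f p) * g p
      = ∑' p, (conj (actA f p) * g p + conj (actB f p) * g p) := by
        refine tsum_congr fun p => ?_
        rw [jacobiAct_eq]; simp only [map_add]; ring
    _ = (∑' p, conj (actA f p) * g p) + ∑' p, conj (actB f p) * g p :=
        Summable.tsum_add (summable_of_support_finite hsupA) (summable_of_support_finite hsupB)
    _ = (∑' p, conj (f p) * actB g p) + ∑' p, conj (f p) * actA g p := by
        rw [pairA, pairB]
    _ = ∑' p, (conj (f p) * actA g p + conj (f p) * actB g p) := by
        rw [add_comm, ← Summable.tsum_add (summable_of_support_finite hAg)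
          (summable_of_support_finite hBg)]
    _ = ∑' p, conj (f p) * jacobiAct g p := by
        refine tsum_congr fun p => ?_
        rw [jacobiAct_eq]; ring

/-! ### Summation by parts in 1D -/

def actA1 (n : ℕ) (f : ℕ → ℂ) : ℕ → ℂ := fun m => (beta m n : ℂ) * f (m + 1)

def actB1 (n : ℕ) (f : ℕ → ℂ) : ℕ → ℂ := fun m =>
  if m = 0 then 0 else (beta (m - 1) n : ℂ) * f (m - 1)

lemma jacobiActRow_eq (n : ℕ) (f : ℕ → ℂ) :
    jacobiActRow n f = fun m => actA1 n f m + actB1 n f m := rfl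

lemma succ_inj' : Function.Injective (fun m : ℕ => m + 1) := fun a b h => by
  simpa using h

lemma tsum_shift1 {F : ℕ → ℂ} (h0 : F 0 = 0) : ∑' m, F (m + 1) = ∑' m, F m := by
  refine succ_inj'.tsum_eq fun m hm => ?_
  rcases Nat.eq_zero_or_pos m with hm' | hm'
  · exact absurd (hm' ▸ h0) hm
  · exact ⟨m - 1, by simp [Nat.sub_add_cancel hm']⟩

lemma pairA1 (n : ℕ) (f g : ℕ → ℂ) :
    ∑' m, conj (actA1 n f m) * g m = ∑' m, conj (f m) * actB1 n g m := by
  rw [← tsum_shift1 (F := fun m => conj (f m) * actB1 n g m) (by simp [actB1])]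
  refine tsum_congr fun m => ?_
  simp only [actA1, actB1, Nat.add_sub_cancel, Nat.succ_ne_zero, if_false, map_mul,
    Complex.conj_ofReal]
  ring

lemma pairB1 (n : ℕ) (f g : ℕ → ℂ) :
    ∑' m, conj (actB1 n f m) * g m = ∑' m, conj (f m) * actA1 n g m := by
  rw [← tsum_shift1 (F := fun m => conj (actB1 n f m) * g m) (by simp [actB1])]
  refine tsum_congr fun m => ?_
  simp only [actA1, actB1, Nat.add_sub_cancel, Nat.succ_ne_zero, if_false, map_mul,
    Complex.conj_ofReal]
  ring

lemma pair1 (n : ℕ) (f g : ℕ → ℂ) (hg : {m : ℕ | g m ≠ 0}.Finite) :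
    ∑' m, conj (jacobiActRow n f m) * g m = ∑' m, conj (f m) * jacobiActRow n g m := by
  have hsupA : {m : ℕ | conj (actA1 n f m) * g m ≠ 0}.Finite :=
    hg.subset fun m hm => by
      simp only [Set.mem_setOf_eq] at *; exact fun h => hm (by rw [h, mul_zero])
  have hsupB : {m : ℕ | conj (actB1 n f m) * g m ≠ 0}.Finite :=
    hg.subset fun m hm => by
      simp only [Set.mem_setOf_eq] at *; exact fun h => hm (by rw [h, mul_zero])
  have hAg : {m : ℕ | conj (f m) * actA1 n g m ≠ 0}.Finite := by
    refine (hg.preimage (Set.injOn_of_injective succ_inj')).subset fun m hm => ?_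
    simp only [Set.mem_setOf_eq, Set.mem_preimage] at *
    intro h
    exact hm (by simp [actA1, h])
  have hBg : {m : ℕ | conj (f m) * actB1 n g m ≠ 0}.Finite := by
    refine ((hg.image (fun m => m + 1))).subset fun m hm => ?_
    simp only [Set.mem_setOf_eq] at hm
    rcases Nat.eq_zero_or_pos m with hm' | hm'
    · exact absurd (by simp [actB1, hm']) hm
    · refine ⟨m - 1, ?_, by simp [Nat.sub_add_cancel hm']⟩
      simp only [Set.mem_setOf_eq]
      intro h
      exact hm (by simp [actB1, Nat.pos_iff_ne_zero.mp hm', h])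
  calc ∑' m, conj (jacobiActRow n f m) * g m
      = ∑' m, (conj (actA1 n f m) * g m + conj (actB1 n f m) * g m) := by
        refine tsum_congr fun m => ?_
        rw [jacobiActRow_eq]; simp only [map_add]; ring
    _ = (∑' m, conj (actA1 n f m) * g m) + ∑' m, conj (actB1 n f m) * g m :=
        Summable.tsum_add (summable_of_support_finite hsupA) (summable_of_support_finite hsupB)
    _ = (∑' m, conj (f m) * actB1 n g m) + ∑' m, conj (f m) * actA1 n g m := by
        rw [pairA1, pairB1]
    _ = ∑' m, (conj (f m) * actA1 n g m + conj (f m) * actB1 n g m) := by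
        rw [add_comm, ← Summable.tsum_add (summable_of_support_finite hAg)
          (summable_of_support_finite hBg)]
    _ = ∑' m, conj (f m) * jacobiActRow n g m := by
        refine tsum_congr fun m => ?_
        rw [jacobiActRow_eq]; ring

/-! ### Adjoint antitone -/

lemma adjoint_anti {E : Type*} [NormedAddCommGroup E] [InnerProductSpace ℂ E] [CompleteSpace E]
    {A B : E →ₗ.[ℂ] E} (hA : Dense (A.domain : Set E)) (hAB : A ≤ B) :
    B.adjoint ≤ A.adjoint := by
  have hB : Dense (B.domain : Set E) := Dense.mono hAB.1 hA
  have h1 : A.IsFormalAdjoint B.adjoint := by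
    intro x y
    obtain ⟨x', hx', hAx⟩ := LinearPMap.exists_of_le hAB x
    rw [hAx, show ((x : E)) = (x' : E) from hx']
    exact (LinearPMap.adjoint_isFormalAdjoint hB).symm x' y
  exact h1.le_adjoint hA

/-! ### Embedding of a single row -/

def embedFun (n : ℕ) (u : ℕ → ℂ) : ℕ × ℕ → ℂ := fun p => if p.2 = n then u p.1 else 0

lemma memℓp_of_row {n : ℕ} {F : ℕ × ℕ → ℂ} (hF : ∀ p : ℕ × ℕ, p.2 ≠ n → F p = 0)
    (h : Memℓp (fun m => F (m, n)) 2) : Memℓp F 2 := by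
  apply memℓp_of_sq_summable
  have hinj : Function.Injective (fun m : ℕ => ((m, n) : ℕ × ℕ)) := fun a b hab => by
    simpa using hab
  refine (Function.Injective.summable_iff hinj ?_).mp ?_
  · intro p hp
    have hpn : p.2 ≠ n := by
      intro hc
      exact hp ⟨p.1, by rw [← hc]⟩
    simp [hF p hpn]
  · exact sq_summable_of_memℓp h

lemma tsum_of_row {n : ℕ} {F : ℕ × ℕ → ℂ} (hF : ∀ p : ℕ × ℕ, p.2 ≠ n → F p = 0) :
    ∑' p, F p = ∑' m, F (m, n) := by
  refine (Function.Injective.tsum_eq (g := fun m : ℕ => ((m, n) : ℕ × ℕ))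
    (fun a b hab => by simpa using hab) ?_).symm
  intro p hp
  have hpn : p.2 = n := by
    by_contra hc
    exact hp (hF p hc)
  exact ⟨p.1, by rw [← hpn]⟩

lemma jacobiAct_embed (n : ℕ) (u : ℕ → ℂ) :
    jacobiAct (embedFun n u) = embedFun n (jacobiActRow n u) := by
  funext p
  rcases p with ⟨m, k⟩
  by_cases hk : k = n
  · subst hk; simp [jacobiAct, jacobiActRow, embedFun]
  · simp [jacobiAct, jacobiActRow, embedFun, hk]

/-! ### Fubini for inner products over rows -/

lemma inner_rows (φ ψ : H2) (u v : ℕ → H1)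
    (hu : ∀ n m, (u n) m = φ (m, n)) (hv : ∀ n m, (v n) m = ψ (m, n)) :
    ⟪φ, ψ⟫ = ∑' n, ⟪u n, v n⟫ := by
  have hrowsum : ∀ n, Summable (fun m => conj (φ (m, n)) * ψ (m, n)) := by
    intro n
    have h := lp.summable_inner (𝕜 := ℂ) (u n) (v n)
    simp only [RCLike.inner_apply'] at h
    exact h.congr fun m => by rw [hu, hv]
  have hswap : Summable (fun q : ℕ × ℕ => conj (φ (q.2, q.1)) * ψ (q.2, q.1)) := by
    have h := lp.summable_inner (𝕜 := ℂ) φ ψ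
    simp only [RCLike.inner_apply'] at h
    exact ((Equiv.prodComm ℕ ℕ).summable_iff
      (f := fun p : ℕ × ℕ => conj (φ p) * ψ p)).mpr h
  calc ⟪φ, ψ⟫ = ∑' p : ℕ × ℕ, conj (φ p) * ψ p := by
        rw [lp.inner_eq_tsum]; simp only [RCLike.inner_apply']
    _ = ∑' q : ℕ × ℕ, conj (φ (q.2, q.1)) * ψ (q.2, q.1) := by
        rw [← (Equiv.prodComm ℕ ℕ).tsum_eq (fun p : ℕ × ℕ => conj (φ p) * ψ p)]
        rfl
    _ = ∑' n, ∑' m, conj (φ (m, n)) * ψ (m, n) :=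
        Summable.tsum_prod' hswap (fun n => hrowsum n)
    _ = ∑' n, ⟪u n, v n⟫ := by
        refine tsum_congr fun n => ?_
        rw [lp.inner_eq_tsum]
        simp only [RCLike.inner_apply']
        exact tsum_congr fun m => by rw [hu, hv]

end CalvoAux

open CalvoAux in
/-- Given self-adjoint extensions `Sₙ` of the Jacobi operators `Jₙ`, the operator `S`
with domain `{f ∈ D(T*) : ∀ n, Pₙ f ∈ D(Sₙ)}` acting by `T*` is a self-adjoint
extension of the Calvo–Picón operator `T`. -/
theorem direct_sum_of_selfAdjoint_extensions_is_selfAdjoint_extension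
    (T : H2 →ₗ.[ℂ] H2)
    (hTdom : ∀ f : H2, f ∈ T.domain ↔ {p : ℕ × ℕ | f p ≠ 0}.Finite)
    (hTact : ∀ f : T.domain, ∀ p : ℕ × ℕ, (T f : H2) p = jacobiAct (⇑(f : H2)) p)
    (J : ℕ → (H1 →ₗ.[ℂ] H1))
    (hJdom : ∀ n : ℕ, ∀ u : H1, u ∈ (J n).domain ↔ {m : ℕ | u m ≠ 0}.Finite)
    (hJact : ∀ n : ℕ, ∀ u : (J n).domain, ∀ m : ℕ,
      ((J n) u : H1) m = jacobiActRow n (⇑(u : H1)) m)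
    (SF : ℕ → (H1 →ₗ.[ℂ] H1))
    (hSF : ∀ n : ℕ, IsSelfAdjoint (SF n) ∧ J n ≤ SF n)
    (S : H2 →ₗ.[ℂ] H2)
    (hSdom : ∀ f : H2, f ∈ S.domain ↔
      (f ∈ T.adjoint.domain ∧
        ∀ n : ℕ, ∃ hs : Memℓp (fun m : ℕ => f (m, n)) 2,
          (⟨fun m : ℕ => f (m, n), hs⟩ : H1) ∈ (SF n).domain))
    (hSact : ∀ (f : H2) (hf : f ∈ S.domain) (hf' : f ∈ T.adjoint.domain),
      S ⟨f, hf⟩ = T.adjoint ⟨f, hf'⟩) :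
    IsSelfAdjoint S ∧ T ≤ S := by
  classical
  have hTdense : Dense (T.domain : Set H2) :=
    dense_of_finiteSupport _ (fun f hf => (hTdom f).mpr hf)
  have hJdense : ∀ n, Dense ((J n).domain : Set H1) := fun n =>
    dense_of_finiteSupport _ (fun u hu => (hJdom n u).mpr hu)
  -- T is symmetric
  have hTsymm : T.IsFormalAdjoint T := by
    intro x y
    rw [lp.inner_eq_tsum, lp.inner_eq_tsum]
    simp only [RCLike.inner_apply']
    calc ∑' p, conj ((T x : H2) p) * (y : H2) p
        = ∑' p, conj (jacobiAct (⇑(x : H2)) p) * (y : H2) p :=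
          tsum_congr fun p => by rw [hTact]
      _ = ∑' p, conj ((x : H2) p) * jacobiAct (⇑(y : H2)) p :=
          pair2 _ _ ((hTdom _).mp y.2)
      _ = ∑' p, conj ((x : H2) p) * (T y : H2) p :=
          tsum_congr fun p => by rw [hTact]
  have hTle : T ≤ T.adjoint := hTsymm.le_adjoint hTdense
  -- pointwise action of T.adjoint
  have hTadj_apply : ∀ (y : T.adjoint.domain) (p : ℕ × ℕ),
      (T.adjoint y : H2) p = jacobiAct (⇑(y : H2)) p := by
    intro y p
    have e_mem : (lp.single 2 p (1 : ℂ) : H2) ∈ T.domain := by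
      refine (hTdom _).mpr (Set.Finite.subset (Set.finite_singleton p) fun q hq => ?_)
      by_contra hqp
      exact hq (lp.single_apply_ne 2 p _ (by simpa using hqp))
    have esupp : {q : ℕ × ℕ | (lp.single 2 p (1 : ℂ) : H2) q ≠ 0}.Finite := (hTdom _).mp e_mem
    have h1 : @inner ℂ _ _ (T.adjoint y : H2)
        (((⟨lp.single 2 p (1 : ℂ), e_mem⟩ : T.domain) : H2)) = conj ((T.adjoint y : H2) p) := by
      show @inner ℂ _ _ (T.adjoint y : H2) (lp.single 2 p (1 : ℂ)) = _
      rw [lp.inner_single_right]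
      simp [RCLike.inner_apply]
    have h2 := (LinearPMap.adjoint_isFormalAdjoint hTdense) y
      (⟨lp.single 2 p (1 : ℂ), e_mem⟩ : T.domain)
    have h3 : @inner ℂ _ _ ((y : H2))
        ((T (⟨lp.single 2 p (1 : ℂ), e_mem⟩ : T.domain) : H2))
        = conj (jacobiAct (⇑(y : H2)) p) := by
      rw [lp.inner_eq_tsum]
      simp only [RCLike.inner_apply']
      calc ∑' q, conj ((y : H2) q) * (T ⟨lp.single 2 p (1 : ℂ), e_mem⟩ : H2) q
          = ∑' q, conj ((y : H2) q) * jacobiAct (⇑(lp.single 2 p (1 : ℂ) : H2)) q :=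
            tsum_congr fun q => by rw [hTact]
        _ = ∑' q, conj (jacobiAct (⇑(y : H2)) q) * (lp.single 2 p (1 : ℂ) : H2) q :=
            (pair2 _ _ esupp).symm
        _ = conj (jacobiAct (⇑(y : H2)) p) := by
            rw [tsum_eq_single p (fun q hq => by
              rw [lp.single_apply_ne 2 p _ hq, mul_zero])]
            rw [lp.single_apply_self]
            exact mul_one _
    have := h1.symm.trans (h2.trans h3)
    exact star_injective this
  -- membership criterion for T.adjoint
  have hmem_Tadj : ∀ y : H2, Memℓp (jacobiAct ⇑y) 2 → y ∈ T.adjoint.domain := by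
    intro y h
    apply LinearPMap.mem_adjoint_domain_of_exists
    refine ⟨(⟨jacobiAct ⇑y, h⟩ : H2), fun x => ?_⟩
    rw [lp.inner_eq_tsum, lp.inner_eq_tsum]
    simp only [RCLike.inner_apply']
    calc ∑' p, conj ((⟨jacobiAct ⇑y, h⟩ : H2) p) * (x : H2) p
        = ∑' p, conj (y p) * jacobiAct (⇑(x : H2)) p :=
          pair2 _ _ ((hTdom _).mp x.2)
      _ = ∑' p, conj (y p) * (T x : H2) p := tsum_congr fun p => by rw [hTact]
  -- pointwise action of (J n).adjoint
  have hJadj_apply : ∀ n (y : (J n).adjoint.domain) (m : ℕ),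
      ((J n).adjoint y : H1) m = jacobiActRow n (⇑(y : H1)) m := by
    intro n y m
    have e_mem : (lp.single 2 m (1 : ℂ) : H1) ∈ (J n).domain := by
      refine (hJdom n _).mpr (Set.Finite.subset (Set.finite_singleton m) fun q hq => ?_)
      by_contra hqp
      exact hq (lp.single_apply_ne 2 m _ (by simpa using hqp))
    have esupp : {q : ℕ | (lp.single 2 m (1 : ℂ) : H1) q ≠ 0}.Finite := (hJdom n _).mp e_mem
    have h1 : @inner ℂ _ _ ((J n).adjoint y : H1)
        (((⟨lp.single 2 m (1 : ℂ), e_mem⟩ : (J n).domain) : H1))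
        = conj (((J n).adjoint y : H1) m) := by
      show @inner ℂ _ _ ((J n).adjoint y : H1) (lp.single 2 m (1 : ℂ)) = _
      rw [lp.inner_single_right]
      simp [RCLike.inner_apply]
    have h2 := (LinearPMap.adjoint_isFormalAdjoint (hJdense n)) y
      (⟨lp.single 2 m (1 : ℂ), e_mem⟩ : (J n).domain)
    have h3 : @inner ℂ _ _ ((y : H1))
        (((J n) (⟨lp.single 2 m (1 : ℂ), e_mem⟩ : (J n).domain) : H1))
        = conj (jacobiActRow n (⇑(y : H1)) m) := by
      rw [lp.inner_eq_tsum]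
      simp only [RCLike.inner_apply']
      calc ∑' q, conj ((y : H1) q) * ((J n) ⟨lp.single 2 m (1 : ℂ), e_mem⟩ : H1) q
          = ∑' q, conj ((y : H1) q) * jacobiActRow n (⇑(lp.single 2 m (1 : ℂ) : H1)) q :=
            tsum_congr fun q => by rw [hJact]
        _ = ∑' q, conj (jacobiActRow n (⇑(y : H1)) q) * (lp.single 2 m (1 : ℂ) : H1) q :=
            (pair1 n _ _ esupp).symm
        _ = conj (jacobiActRow n (⇑(y : H1)) m) := by
            rw [tsum_eq_single m (fun q hq => by
              rw [lp.single_apply_ne 2 m _ hq, mul_zero])]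
            rw [lp.single_apply_self]
            exact mul_one _
    have := h1.symm.trans (h2.trans h3)
    exact star_injective this
  -- SF n is contained in (J n).adjoint
  have hSFle : ∀ n, SF n ≤ (J n).adjoint := fun n =>
    (LinearPMap.isSelfAdjoint_def.mp (hSF n).1) ▸ adjoint_anti (hJdense n) (hSF n).2
  have hSF_apply : ∀ n (u : (SF n).domain) (m : ℕ),
      ((SF n) u : H1) m = jacobiActRow n (⇑(u : H1)) m := by
    intro n u m
    obtain ⟨u', hu', hval⟩ := LinearPMap.exists_of_le (hSFle n) u
    rw [hval, hJadj_apply n u' m]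
    rw [show ⇑(u' : H1) = ⇑(u : H1) from by rw [← hu']]
  have hSFsymm : ∀ n (a b : (SF n).domain),
      @inner ℂ _ _ ((SF n) a : H1) ((b : H1)) = @inner ℂ _ _ ((a : H1)) ((SF n) b : H1) := by
    intro n a b
    have hd : Dense ((SF n).domain : Set H1) := (hSF n).1.dense_domain
    have heq := LinearPMap.isSelfAdjoint_def.mp (hSF n).1
    have h := LinearPMap.adjoint_isFormalAdjoint hd (T := SF n)
    rw [heq] at h
    exact h a b
  -- T ≤ S
  have hTdomS : ∀ f : H2, f ∈ T.domain → f ∈ S.domain := by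
    intro f hf
    rw [hSdom]
    refine ⟨hTle.1 hf, fun n => ?_⟩
    refine ⟨rowMemℓp f n, ?_⟩
    apply (hSF n).2.1
    rw [hJdom]
    refine Set.Finite.subset (((hTdom f).mp hf).image Prod.fst) fun m hm => ?_
    exact ⟨(m, n), hm, rfl⟩
  have hTleS : T ≤ S := by
    refine ⟨fun a ha => hTdomS a ha, ?_⟩
    intro x y hxy
    have hyT : (y : H2) ∈ T.adjoint.domain := ((hSdom ↑y).mp y.2).1
    rw [hSact ↑y y.2 hyT]
    rw [hTle.2 (x := x) (y := ⟨↑x, hTle.1 x.2⟩) rfl]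
    congr 1
    exact Subtype.ext hxy
  have hSdense : Dense (S.domain : Set H2) :=
    dense_of_finiteSupport _ (fun f hf => hTdomS f ((hTdom f).mpr hf))
  -- pointwise action of S
  have hSapply : ∀ (f : S.domain) (p : ℕ × ℕ),
      (S f : H2) p = jacobiAct (⇑(f : H2)) p := by
    intro f p
    rw [hSact ↑f f.2 ((hSdom ↑f).mp f.2).1]
    exact hTadj_apply _ p
  -- rows of elements of S.domain
  have hrow : ∀ (f : S.domain) (n : ℕ), ∃ u : (SF n).domain,
      ∀ m, ((u : H1)) m = (f : H2) (m, n) := by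
    intro f n
    obtain ⟨hs, hmem⟩ := ((hSdom ↑f).mp f.2).2 n
    exact ⟨⟨⟨fun m => (f : H2) (m, n), hs⟩, hmem⟩, fun m => rfl⟩
  have hSrow : ∀ (f : S.domain) (n : ℕ) (u : (SF n).domain),
      (∀ m, (u : H1) m = (f : H2) (m, n)) →
      ∀ m, ((SF n) u : H1) m = (S f : H2) (m, n) := by
    intro f n u hu m
    rw [hSF_apply n u m, hSapply f (m, n)]
    show jacobiActRow n (⇑(u : H1)) m = jacobiAct (⇑(f : H2)) (m, n)
    simp only [jacobiActRow, jacobiAct]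
    rw [hu (m + 1), hu (m - 1)]
  -- S is symmetric
  have hSsymm : S.IsFormalAdjoint S := by
    intro x y
    choose ux hux using fun n => hrow x n
    choose uy huy using fun n => hrow y n
    calc @inner ℂ _ _ (S x : H2) ((y : H2))
        = ∑' n, @inner ℂ _ _ ((SF n) (ux n) : H1) ((uy n : H1)) :=
          inner_rows (S x : H2) (y : H2) (fun n => ((SF n) (ux n) : H1))
            (fun n => (uy n : H1)) (fun n m => hSrow x n (ux n) (hux n) m)
            (fun n m => huy n m)
      _ = ∑' n, @inner ℂ _ _ ((ux n : H1)) ((SF n) (uy n) : H1) :=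
          tsum_congr fun n => hSFsymm n (ux n) (uy n)
      _ = @inner ℂ _ _ ((x : H2)) (S y : H2) :=
          (inner_rows (x : H2) (S y : H2) (fun n => (ux n : H1))
            (fun n => ((SF n) (uy n) : H1)) (fun n m => hux n m)
            (fun n m => hSrow y n (uy n) (huy n) m)).symm
  have hSle : S ≤ S.adjoint := hSsymm.le_adjoint hSdense
  have hSadjleTadj : S.adjoint ≤ T.adjoint := adjoint_anti hTdense hTleS
  -- S.adjoint ≤ S
  have hmemS : ∀ g : S.adjoint.domain, (g : H2) ∈ S.domain := by
    intro g
    have hgT : (g : H2) ∈ T.adjoint.domain := hSadjleTadj.1 g.2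
    rw [hSdom]
    refine ⟨hgT, fun n => ?_⟩
    refine ⟨rowMemℓp _ n, ?_⟩
    have hadj : (⟨fun m => (g : H2) (m, n), rowMemℓp _ n⟩ : H1) ∈ (SF n).adjoint.domain := by
      apply LinearPMap.mem_adjoint_domain_of_exists
      refine ⟨(⟨fun m => (S.adjoint g : H2) (m, n), rowMemℓp _ n⟩ : H1), fun x => ?_⟩
      have hxrow : Memℓp (jacobiActRow n (⇑(x : H1))) 2 := by
        have he : (fun m => ((SF n) x : H1) m) = jacobiActRow n (⇑(x : H1)) :=
          funext (hSF_apply n x)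
        rw [← he]
        exact lp.memℓp ((SF n) x)
      have hxE : Memℓp (embedFun n (⇑(x : H1))) 2 := by
        refine memℓp_of_row (n := n) (fun p hp => by simp [embedFun, hp]) ?_
        have he : (fun m => embedFun n (⇑(x : H1)) (m, n)) = ⇑(x : H1) :=
          funext fun m => by simp [embedFun]
        rw [he]
        exact lp.memℓp (x : H1)
      have hET : (⟨embedFun n (⇑(x : H1)), hxE⟩ : H2) ∈ T.adjoint.domain := by
        apply hmem_Tadj
        show Memℓp (jacobiAct (embedFun n (⇑(x : H1)))) 2
        rw [jacobiAct_embed]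
        refine memℓp_of_row (n := n) (fun p hp => by simp [embedFun, hp]) ?_
        have he : (fun m => embedFun n (jacobiActRow n (⇑(x : H1))) (m, n))
            = jacobiActRow n (⇑(x : H1)) := funext fun m => by simp [embedFun]
        rw [he]
        exact hxrow
      have hES : (⟨embedFun n (⇑(x : H1)), hxE⟩ : H2) ∈ S.domain := by
        rw [hSdom]
        refine ⟨hET, fun k => ?_⟩
        by_cases hk : k = n
        · subst hk
          have he : (fun m => (⟨embedFun k (⇑(x : H1)), hxE⟩ : H2) (m, k)) = ⇑(x : H1) :=
            funext fun m => by simp [embedFun]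
          rw [he]
          exact ⟨lp.memℓp (x : H1), by
            rw [show (⟨⇑(x : H1), lp.memℓp (x : H1)⟩ : H1) = (x : H1) from Subtype.ext rfl]
            exact x.2⟩
        · have he : (fun m => (⟨embedFun n (⇑(x : H1)), hxE⟩ : H2) (m, k))
              = (fun _ : ℕ => (0 : ℂ)) := funext fun m => by simp [embedFun, hk]
          rw [he]
          refine ⟨memℓp_of_finiteSupport (by simp), ?_⟩
          rw [show (⟨(fun _ : ℕ => (0 : ℂ)), memℓp_of_finiteSupport (by simp)⟩ : H1)
            = (0 : H1) from Subtype.ext rfl]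
          exact (SF k).domain.zero_mem
      have key := (LinearPMap.adjoint_isFormalAdjoint hSdense) g
        (⟨(⟨embedFun n (⇑(x : H1)), hxE⟩ : H2), hES⟩ : S.domain)
      have hL : @inner ℂ _ _ (S.adjoint g : H2) ((⟨embedFun n (⇑(x : H1)), hxE⟩ : H2))
          = @inner ℂ _ _ ((⟨fun m => (S.adjoint g : H2) (m, n), rowMemℓp _ n⟩ : H1))
            ((x : H1)) := by
        rw [lp.inner_eq_tsum, lp.inner_eq_tsum]
        simp only [RCLike.inner_apply']
        rw [tsum_of_row (n := n)
          (F := fun p => conj ((S.adjoint g : H2) p) * (⟨embedFun n (⇑(x : H1)), hxE⟩ : H2) p)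
          (fun p hp => by
            show conj ((S.adjoint g : H2) p) * embedFun n (⇑(x : H1)) p = 0
            simp [embedFun, hp])]
        refine tsum_congr fun m => ?_
        show conj ((S.adjoint g : H2) (m, n)) * embedFun n (⇑(x : H1)) (m, n) = _
        simp [embedFun]
      have hcoord : ∀ p, (S (⟨(⟨embedFun n (⇑(x : H1)), hxE⟩ : H2), hES⟩ : S.domain) : H2) p
          = embedFun n (jacobiActRow n (⇑(x : H1))) p := by
        intro p
        rw [hSapply _ p]
        show jacobiAct (embedFun n (⇑(x : H1))) p = _
        rw [jacobiAct_embed]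
      have hR : @inner ℂ _ _ ((g : H2))
          (S (⟨(⟨embedFun n (⇑(x : H1)), hxE⟩ : H2), hES⟩ : S.domain) : H2)
          = @inner ℂ _ _ ((⟨fun m => (g : H2) (m, n), rowMemℓp _ n⟩ : H1))
            ((SF n) x : H1) := by
        rw [lp.inner_eq_tsum, lp.inner_eq_tsum]
        simp only [RCLike.inner_apply']
        rw [tsum_congr (fun p => by rw [hcoord p])]
        rw [tsum_of_row (n := n)
          (F := fun p => conj ((g : H2) p) * embedFun n (jacobiActRow n (⇑(x : H1))) p)
          (fun p hp => by simp [embedFun, hp])]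
        refine tsum_congr fun m => ?_
        rw [hSF_apply n x m]
        show conj ((g : H2) (m, n)) * embedFun n (jacobiActRow n (⇑(x : H1))) (m, n) = _
        simp [embedFun]
      rw [← hL, ← hR]
      exact key
    have heq := LinearPMap.isSelfAdjoint_def.mp (hSF n).1
    exact (congrArg LinearPMap.domain heq) ▸ hadj
  have hdir2 : S.adjoint ≤ S := by
    refine ⟨fun a ha => hmemS ⟨a, ha⟩, ?_⟩
    intro x y hxy
    have hyT : (y : H2) ∈ T.adjoint.domain := ((hSdom ↑y).mp y.2).1
    rw [hSact ↑y y.2 hyT]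
    have hxT : (x : H2) ∈ T.adjoint.domain := hSadjleTadj.1 x.2
    rw [hSadjleTadj.2 (x := x) (y := ⟨↑x, hxT⟩) rfl]
    congr 1
    exact Subtype.ext hxy
  exact ⟨LinearPMap.isSelfAdjoint_def.mpr (le_antisymm hdir2 hSle), hTleS⟩
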